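/- Sharpness: for 1 < p < ∞ and for each c < c_p (the unique positive root of (p-1)x^p − p x^{p-1} − 1 = 0), there exists f ∈ L^p(ℝ) with ‖f‖_p > 0 and ‖M f‖_p > c ‖f‖_p. One may take f = f_{ε,N}(t) = |t|^{-1/p} 1_{[ε,N]}(|t|) with ε small and N large. -/

import Mathlib

open MeasureTheory Set
open scoped ENNReal

/-- The uncentered Hardy-Littlewood maximal function over intervals. -/
noncomputable def M (f : ℝ → ℝ) (x : ℝ) : ℝ≥0∞ :=
  ⨆ (a : ℝ) (b : ℝ) (_ : a ≤ x) (_ : x ≤ b) (_ : a < b),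
    ENNReal.ofReal ((b - a)⁻¹ * ∫ t in a..b, |f t|)

noncomputable def fNaux (p N : ℝ) : ℝ → ℝ := fun t =>
  if 1 ≤ |t| ∧ |t| ≤ N then |t| ^ (-(1/p)) else 0
lemma fNaux_nonneg (p N : ℝ) (t : ℝ) : 0 ≤ fNaux p N t := by
  unfold fNaux; split
  · exact Real.rpow_nonneg (abs_nonneg t) _
  · exact le_refl 0

lemma fNaux_le_one (p N : ℝ) (hp : 0 < p) (t : ℝ) : fNaux p N t ≤ 1 := by
  unfold fNaux; split
  · refine Real.rpow_le_one_of_one_le_of_nonpos (by tauto) ?_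
    have : (0:ℝ) ≤ 1/p := by positivity
    linarith
  · exact zero_le_one

lemma fNaux_meas (p N : ℝ) : Measurable (fNaux p N) := by
  unfold fNaux
  refine Measurable.ite ?_ ?_ measurable_const
  · exact (measurableSet_le measurable_const measurable_abs).inter
      (measurableSet_le measurable_abs measurable_const)
  · have h : Measurable (fun x : ℝ => x ^ (-(1/p))) := by measurability
    exact h.comp measurable_abs

lemma fNaux_neg (p N t : ℝ) : fNaux p N (-t) = fNaux p N t := by simp [fNaux]

lemma fNaux_integrable (p N : ℝ) (hp : 0 < p) : Integrable (fNaux p N) := by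
  have hind : Integrable ((Icc (-N) N).indicator fun _ => (1:ℝ)) := by
    rw [integrable_indicator_iff measurableSet_Icc]
    exact integrableOn_const (by rw [Real.volume_Icc]; exact ENNReal.ofReal_ne_top)
  refine hind.mono' (fNaux_meas p N).aestronglyMeasurable ?_
  filter_upwards with t
  rw [Real.norm_eq_abs, abs_of_nonneg (fNaux_nonneg p N t)]
  by_cases h : 1 ≤ |t| ∧ |t| ≤ N
  · have ht : t ∈ Icc (-N) N := abs_le.1 h.2
    rw [indicator_of_mem ht]
    exact fNaux_le_one p N hp t
  · rw [fNaux]; simp only [h, if_false]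
    exact Set.indicator_nonneg (fun _ _ => zero_le_one) t

lemma fNaux_intInt (p N : ℝ) (hp : 0 < p) (a b : ℝ) : IntervalIntegrable (fNaux p N) volume a b :=
  (fNaux_integrable p N hp).intervalIntegrable
lemma fN_key (p N w : ℝ) (hp : 1 < p) (h1 : 1 ≤ w) (h2 : w ≤ N) :
    ∫ t in (1:ℝ)..w, fNaux p N t = (w ^ (1 - 1/p) - 1) / (1 - 1/p) := by
  have hp0 : 0 < p := lt_trans one_pos hp
  rw [intervalIntegral.integral_congr (g := fun t : ℝ => t ^ (-(1/p)))
    (by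
      intro t ht
      rw [uIcc_of_le h1] at ht
      obtain ⟨ht1, ht2⟩ := ht
      have habs : |t| = t := abs_of_nonneg (le_trans zero_le_one ht1)
      simp [fNaux, habs, ht1, le_trans ht2 h2])]
  rw [integral_rpow (Or.inl (by
    have : 1/p < 1 := by
      rw [div_lt_one hp0]; exact hp
    linarith))]
  have he : -(1/p) + 1 = 1 - 1/p := by ring
  rw [he, Real.one_rpow]

lemma fN_integral (p N u v : ℝ) (hp : 1 < p) (hu : 1 ≤ u) (hv : 1 ≤ v)
    (huN : u ≤ N) (hvN : v ≤ N) :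
    ∫ t in (-u)..v, fNaux p N t
      = (u ^ (1 - 1/p) + v ^ (1 - 1/p) - 2) / (1 - 1/p) := by
  have hp0 : 0 < p := lt_trans one_pos hp
  have hneg : ∫ t in (-u)..(-1:ℝ), fNaux p N t = (u ^ (1 - 1/p) - 1) / (1 - 1/p) := by
    have hc := intervalIntegral.integral_comp_neg (a := (1:ℝ)) (b := u) (f := fNaux p N)
    simp only [fNaux_neg] at hc
    rw [← hc, fN_key p N u hp hu huN]
  have hmid : ∫ t in (-1:ℝ)..(1:ℝ), fNaux p N t = 0 := by
    rw [intervalIntegral.integral_of_le (by norm_num)]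
    apply MeasureTheory.integral_eq_zero_of_ae
    rw [Filter.EventuallyEq, ae_restrict_iff' measurableSet_Ioc]
    have h1 : ∀ᵐ (t : ℝ), t ≠ 1 := by
      rw [ae_iff]
      simp [measure_singleton]
    filter_upwards [h1] with t ht1 htm
    have habs : |t| < 1 := by
      rw [abs_lt]
      exact ⟨htm.1, lt_of_le_of_ne htm.2 ht1⟩
    have : ¬ (1 ≤ |t|) := not_le.2 habs
    simp [fNaux, this]
  have h12 := intervalIntegral.integral_add_adjacent_intervals
    (fNaux_intInt p N hp0 (-u) (-1)) (fNaux_intInt p N hp0 (-1) 1)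
  have h123 := intervalIntegral.integral_add_adjacent_intervals
    (fNaux_intInt p N hp0 (-u) 1) (fNaux_intInt p N hp0 1 v)
  rw [← h123, ← h12, hneg, hmid, fN_key p N v hp hv hvN]
  ring
lemma absinv_intOn (a b : ℝ) (ha : 0 < a) : IntegrableOn (fun x : ℝ => |x|⁻¹) (Icc a b) := by
  apply ContinuousOn.integrableOn_compact isCompact_Icc
  apply ContinuousOn.inv₀ continuous_abs.continuousOn
  intro x hx
  have : 0 < x := lt_of_lt_of_le ha hx.1
  positivity

lemma absinv_intOn_neg (a b : ℝ) (ha : 0 < a) :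
    IntegrableOn (fun x : ℝ => |x|⁻¹) (Icc (-b) (-a)) := by
  apply ContinuousOn.integrableOn_compact isCompact_Icc
  apply ContinuousOn.inv₀ continuous_abs.continuousOn
  intro x hx
  have : x < 0 := lt_of_le_of_lt hx.2 (by linarith)
  have : |x| > 0 := abs_pos.2 (ne_of_lt this)
  positivity

lemma aux_setint (a b : ℝ) (ha : 0 < a) (hab : a ≤ b) :
    ∫ x in (Icc (-b) (-a) ∪ Icc a b), |x|⁻¹ = 2 * (Real.log b - Real.log a) := by
  have hb : 0 < b := lt_of_lt_of_le ha hab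
  have hdisj : Disjoint (Icc (-b) (-a)) (Icc a b) := by
    rw [Set.disjoint_left]
    intro x hx1 hx2
    have := hx1.2; have := hx2.1; linarith
  have hpos : ∫ x in Icc a b, |x|⁻¹ = Real.log b - Real.log a := by
    rw [setIntegral_congr_fun measurableSet_Icc
      (g := fun x : ℝ => x⁻¹) (fun x hx => by
        simp only []
        rw [abs_of_pos (lt_of_lt_of_le ha hx.1)])]
    rw [MeasureTheory.integral_Icc_eq_integral_Ioc,
      ← intervalIntegral.integral_of_le hab,
      integral_inv (by
        rw [Set.uIcc_of_le hab]
        intro h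
        exact absurd h.1 (not_le.2 ha)),
      Real.log_div (ne_of_gt hb) (ne_of_gt ha)]
  have hneg : ∫ x in Icc (-b) (-a), |x|⁻¹ = Real.log b - Real.log a := by
    rw [setIntegral_congr_fun measurableSet_Icc
      (g := fun x : ℝ => (-x)⁻¹) (fun x hx => by
        simp only []
        rw [abs_of_neg (lt_of_le_of_lt hx.2 (by linarith))]
        )]
    rw [MeasureTheory.integral_Icc_eq_integral_Ioc,
      ← intervalIntegral.integral_of_le (by linarith : -b ≤ -a)]
    have hc := intervalIntegral.integral_comp_neg (a := -b) (b := -a) (f := fun y : ℝ => y⁻¹)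
    simp only [neg_neg] at hc
    rw [hc, integral_inv (by
        rw [Set.uIcc_of_le hab]
        intro h
        exact absurd h.1 (not_le.2 ha)),
      Real.log_div (ne_of_gt hb) (ne_of_gt ha)]
  rw [setIntegral_union hdisj measurableSet_Icc (absinv_intOn_neg a b ha) (absinv_intOn a b ha),
    hpos, hneg]
  ring

lemma avg_poly (q s cp d δ X y S : ℝ) (hq : 0 < q) (hs : 0 < s) (hy : 0 < y)
    (hX : 0 < X) (hδ : 0 < δ) (hd : d = cp - δ) (hkey : S = q*(1+s)*cp - 1)
    (h2 : 2 ≤ q*δ*X) :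
    d * (X / y) ≤ ((1+s)*y)⁻¹ * ((S*X + X - 2)/q) := by
  rw [mul_div_assoc', inv_mul_eq_div, div_div,
    div_le_div_iff₀ hy (by positivity), hkey, hd]
  have hfin : 2 ≤ q*(1+s)*δ*X := by
    nlinarith [mul_nonneg (mul_nonneg hq.le hδ.le) (mul_nonneg hs.le hX.le)]
  nlinarith [mul_nonneg hy.le (sub_nonneg.2 hfin)]

/-- Sharpness: for each `c < c_p` there is `f ∈ L^p(ℝ)`, `‖f‖_p > 0`, with
`‖Mf‖_p > c ‖f‖_p`. -/
theorem maximal_sharpness (p cp c : ℝ) (hp : 1 < p) (hcp : 0 < cp)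
    (hroot : (p - 1) * cp ^ p - p * cp ^ (p - 1) - 1 = 0) (hc : c < cp) :
    ∃ f : ℝ → ℝ, Measurable f ∧ (∫⁻ x, ENNReal.ofReal |f x| ^ p) < ∞ ∧
      0 < (∫⁻ x, ENNReal.ofReal |f x| ^ p) ∧
      ENNReal.ofReal c * (∫⁻ x, ENNReal.ofReal |f x| ^ p) ^ (1 / p)
        < (∫⁻ x, M f x ^ p) ^ (1 / p) := by
  have hp0 : 0 < p := lt_trans one_pos hp
  have hq : 0 < 1 - 1/p := by
    have : 1/p < 1 := by rw [div_lt_one hp0]; exact hp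
    linarith
  set q : ℝ := 1 - 1/p with hqdef
  have hcpp_pos : 0 < cp ^ p := Real.rpow_pos_of_pos hcp p
  have hcpq_pos : 0 < cp ^ (p-1) := Real.rpow_pos_of_pos hcp (p-1)
  have hcpp1 : cp ^ (p-1) * cp = cp ^ p := by
    rw [← Real.rpow_add_one (ne_of_gt hcp) (p-1)]
    ring_nf
  have hfac : cp ^ (p-1) * ((p-1) * cp - p) = 1 := by
    linear_combination (p-1) * hcpp1 + hroot
  have hcp1 : 1 < cp := by
    have h2 : 0 < (p-1)*cp - p := by
      by_contra h
      push_neg at h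
      nlinarith
    nlinarith
  -- constants
  set c₀ : ℝ := max c (cp/2) with hc0def
  have hc0pos : 0 < c₀ := lt_of_lt_of_le (by linarith) (le_max_right _ _)
  have hcc0 : c ≤ c₀ := le_max_left _ _
  have hc0cp : c₀ < cp := max_lt hc (by linarith)
  set d : ℝ := (cp + c₀)/2 with hddef
  set δ : ℝ := (cp - c₀)/2 with hdelδ
  have hdpos : 0 < d := by rw [hddef]; linarith
  have hδpos : 0 < δ := by rw [hdelδ]; linarith
  have hdcp : d = cp - δ := by rw [hddef, hdelδ]; ring
  have hc0d : c₀ < d := by rw [hddef]; linarith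
  set s : ℝ := cp ^ (-p) with hsdef
  have hs_pos : 0 < s := Real.rpow_pos_of_pos hcp _
  have hs_eq : s = (cp ^ p)⁻¹ := by rw [hsdef, Real.rpow_neg hcp.le]
  have hs_inv : s * cp ^ p = 1 := by rw [hs_eq]; field_simp
  have hs1 : s < 1 := Real.rpow_lt_one_of_one_lt_of_neg hcp1 (by linarith)
  have hsq : s ^ q = cp / cp ^ p := by
    rw [hsdef, ← Real.rpow_mul hcp.le]
    have he : -p * q = 1 - p := by rw [hqdef]; field_simp; ring
    rw [he]
    rw [Real.rpow_sub hcp, Real.rpow_one]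
  have e1 : (p-1)*cp*(cp^p) = p*(cp^p) + cp := by
    linear_combination cp * hroot + p * hcpp1
  have hkey : q * (1 + s) * cp = s ^ q + 1 := by
    rw [hsq, hs_eq, hqdef]
    field_simp
    linear_combination e1
  -- A and N
  set A₂ : ℝ := (2/(q*δ)) ^ q⁻¹ with hA2def
  have hA2pos : 0 < A₂ := Real.rpow_pos_of_pos (by positivity) _
  set A : ℝ := max (cp ^ p) A₂ with hAdef
  have hA1 : 1 < A := lt_of_lt_of_le
    ((Real.one_lt_rpow_iff_of_pos hcp).2 (Or.inl ⟨hcp1, hp0⟩)) (le_max_left _ _)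
  have hA0 : 0 < A := lt_trans one_pos hA1
  have hAcp : cp ^ p ≤ A := le_max_left _ _
  have hA2A : A₂ ≤ A := le_max_right _ _
  set L : ℝ := Real.log A with hLdef
  have hL0 : 0 ≤ L := Real.log_nonneg hA1.le
  set D : ℝ := d ^ p with hDdef
  set C0 : ℝ := c₀ ^ p with hC0def
  have hD0 : 0 < D := Real.rpow_pos_of_pos hdpos p
  have hC00 : 0 < C0 := Real.rpow_pos_of_pos hc0pos p
  have hCD : C0 < D := Real.rpow_lt_rpow hc0pos.le hc0d hp0
  set T : ℝ := max 1 (2*D*L/(D-C0)) with hTdef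
  have hT1 : 1 ≤ T := le_max_left _ _
  have hT2 : 2*D*L/(D-C0) ≤ T := le_max_right _ _
  have hT2' : 2*D*L ≤ (D-C0)*T := by
    rw [div_le_iff₀ (by linarith)] at hT2
    linarith
  have hT0 : 0 < T := lt_of_lt_of_le one_pos hT1
  have hDT : (D-C0)*T ≤ D*T := mul_le_mul_of_nonneg_right (by linarith) hT0.le
  have h2LT : 2*L ≤ T := by
    have h5 : 2*D*L ≤ D*T := le_trans hT2' hDT
    have h4 : D*(2*L) ≤ D*T := by
      calc D*(2*L) = 2*D*L := by ring
        _ ≤ D*T := h5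
    exact le_of_mul_le_mul_left h4 hD0
  have hTL : L < T := by
    rcases eq_or_lt_of_le hL0 with h|h
    · calc L = 0 := h.symm
        _ < 1 := one_pos
        _ ≤ T := hT1
    · linarith
  set N : ℝ := Real.exp T with hNdef
  have hN0 : 0 < N := Real.exp_pos T
  have hlogN : Real.log N = T := Real.log_exp T
  have hAN : A ≤ N := by
    have hA' : A = Real.exp L := (Real.exp_log hA0).symm
    rw [hA', hNdef]
    exact Real.exp_le_exp.2 hTL.le
  have hN1 : 1 < N := lt_of_lt_of_le hA1 hAN
  have hnum : C0 * (2*T) < D * (2*(T-L)) := by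
    rcases eq_or_lt_of_le hL0 with h|h
    · have h5 := mul_lt_mul_of_pos_right hCD (show (0:ℝ) < 2*T by linarith)
      rw [← h]
      simpa using h5
    · have hDL : 0 < D*L := mul_pos hD0 h
      linarith [hT2', hDL]
  -- membership characterization
  have hiff : ∀ x : ℝ, x ∈ (Icc (-N) (-1) ∪ Icc 1 N : Set ℝ) ↔ (1 ≤ |x| ∧ |x| ≤ N) := by
    intro x
    rcases le_total 0 x with h0|h0
    · rw [abs_of_nonneg h0]
      constructor
      · rintro (⟨ha,hb⟩|⟨ha,hb⟩)
        · constructor <;> linarith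
        · exact ⟨ha, hb⟩
      · rintro ⟨ha, hb⟩
        exact Or.inr ⟨ha, hb⟩
    · rw [abs_of_nonpos h0]
      constructor
      · rintro (⟨ha,hb⟩|⟨ha,hb⟩)
        · constructor <;> linarith
        · constructor <;> linarith
      · rintro ⟨ha, hb⟩
        exact Or.inl ⟨by linarith, by linarith⟩
  have hS0 : MeasurableSet (Icc (-N) (-1) ∪ Icc 1 N : Set ℝ) :=
    measurableSet_Icc.union measurableSet_Icc
  have hf_lint : ∫⁻ x, ENNReal.ofReal |fNaux p N x| ^ p = ENNReal.ofReal (2 * T) := by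
    have hpt : ∀ x : ℝ, ENNReal.ofReal |fNaux p N x| ^ p
        = ENNReal.ofReal ((Icc (-N) (-1) ∪ Icc 1 N : Set ℝ).indicator (fun x => |x|⁻¹) x) := by
      intro x
      rw [abs_of_nonneg (fNaux_nonneg p N x),
          ENNReal.ofReal_rpow_of_nonneg (fNaux_nonneg p N x) hp0.le]
      congr 1
      by_cases h : 1 ≤ |x| ∧ |x| ≤ N
      · rw [indicator_of_mem ((hiff x).2 h)]
        have hfx : fNaux p N x = |x| ^ (-(1/p)) := by rw [fNaux]; simp only [h, and_self, if_true]
        rw [hfx, ← Real.rpow_mul (abs_nonneg x)]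
        rw [show -(1/p)*p = -1 by field_simp, Real.rpow_neg_one]
      · have hfx : fNaux p N x = 0 := by rw [fNaux]; simp only [h, if_false]
        rw [hfx, indicator_of_notMem (fun hm => h ((hiff x).1 hm)), Real.zero_rpow (ne_of_gt hp0)]
    rw [lintegral_congr hpt]
    have hInd : Integrable ((Icc (-N) (-1) ∪ Icc 1 N : Set ℝ).indicator (fun x : ℝ => |x|⁻¹)) := by
      rw [integrable_indicator_iff hS0]
      exact (absinv_intOn_neg 1 N one_pos).union (absinv_intOn 1 N one_pos)
    rw [← MeasureTheory.ofReal_integral_eq_lintegral_ofReal hInd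
      (Filter.Eventually.of_forall fun x => indicator_nonneg (fun y _ => by positivity) x)]
    rw [MeasureTheory.integral_indicator hS0, aux_setint 1 N one_pos hN1.le, Real.log_one, hlogN]
    norm_num
  -- pointwise lower bound for M
  have habs : ∀ t, |fNaux p N t| = fNaux p N t := fun t => abs_of_nonneg (fNaux_nonneg p N t)
  have hpoint : ∀ y, A ≤ y → y ≤ N →
      (∀ z : ℝ, z = y ∨ z = -y → ENNReal.ofReal (d * y ^ (-(1/p))) ≤ M (fNaux p N) z) := by
    intro y hAy hyN
    have hy1 : 1 ≤ y := le_of_lt (lt_of_lt_of_le hA1 hAy)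
    have hy0 : 0 < y := lt_of_lt_of_le one_pos hy1
    have hsy0 : 0 < s * y := mul_pos hs_pos hy0
    have hsy1 : 1 ≤ s * y := by
      have h7 : s * (cp ^ p) ≤ s * y := by
        apply mul_le_mul_of_nonneg_left (le_trans hAcp hAy) hs_pos.le
      rw [hs_inv] at h7
      exact h7
    have hsyN : s * y ≤ N := by
      have : s * y ≤ 1 * y := mul_le_mul_of_nonneg_right hs1.le hy0.le
      rw [one_mul] at this
      linarith
    have havg : d * y ^ (-(1/p)) ≤ ((1+s)*y)⁻¹ * ((s ^ q * y ^ q + y ^ q - 2) / q) := by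
      have hX : 2/(q*δ) ≤ y ^ q := by
        have h1 : A₂ ^ q ≤ y ^ q := Real.rpow_le_rpow hA2pos.le (le_trans hA2A hAy) hq.le
        have h2 : A₂ ^ q = 2/(q*δ) := by
          rw [hA2def, ← Real.rpow_mul (by positivity), inv_mul_cancel₀ (ne_of_gt hq), Real.rpow_one]
        linarith
      have hXpos : 0 < y ^ q := Real.rpow_pos_of_pos hy0 _
      have h2qd : 2 ≤ q * δ * y ^ q := by
        have hqδ : 0 < q*δ := mul_pos hq hδpos
        rw [div_le_iff₀ hqδ] at hX
        linarith
      have hyq1 : y ^ (-(1/p)) = y ^ q / y := by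
        rw [show -(1/p) = q - 1 by rw [hqdef]; ring, Real.rpow_sub hy0, Real.rpow_one]
      rw [hyq1]
      exact avg_poly q s cp d δ (y ^ q) y (s ^ q) hq hs_pos hy0 hXpos hδpos hdcp
        (by linarith [hkey]) h2qd
    have hsyq : (s*y) ^ q = s ^ q * y ^ q := Real.mul_rpow hs_pos.le hy0.le
    intro z hz
    rcases hz with rfl|rfl
    · refine le_trans ?_ (le_iSup_of_le (-(s*z)) (le_iSup_of_le z (le_iSup_of_le (by linarith)
        (le_iSup_of_le le_rfl (le_iSup_of_le (by linarith) le_rfl)))))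
      apply ENNReal.ofReal_le_ofReal
      simp only [habs]
      rw [fN_integral p N (s*z) z hp hsy1 hy1 hsyN hyN]
      rw [show z - -(s*z) = (1+s)*z by ring, ← hqdef, hsyq]
      exact havg
    · refine le_trans ?_ (le_iSup_of_le (-y) (le_iSup_of_le (s*y) (le_iSup_of_le le_rfl
        (le_iSup_of_le (by linarith) (le_iSup_of_le (by linarith) le_rfl)))))
      apply ENNReal.ofReal_le_ofReal
      simp only [habs]
      rw [fN_integral p N y (s*y) hp hy1 hsy1 hyN hsyN]
      rw [show s*y - -y = (1+s)*y by ring, ← hqdef, hsyq]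
      calc d * y ^ (-(1/p)) ≤ ((1+s)*y)⁻¹ * ((s ^ q * y ^ q + y ^ q - 2) / q) := havg
        _ = ((1+s)*y)⁻¹ * ((y ^ q + s ^ q * y ^ q - 2) / q) := by ring
  -- lower bound for the lintegral of (M f)^p
  have hS1 : MeasurableSet (Icc (-N) (-A) ∪ Icc A N : Set ℝ) :=
    measurableSet_Icc.union measurableSet_Icc
  have hlow : ENNReal.ofReal (D * (2*(T - L))) ≤ ∫⁻ x, M (fNaux p N) x ^ p := by
    have hmono : ∀ x, (Icc (-N) (-A) ∪ Icc A N : Set ℝ).indicator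
        (fun x => ENNReal.ofReal (D * |x|⁻¹)) x ≤ M (fNaux p N) x ^ p := by
      intro x
      by_cases hx : x ∈ (Icc (-N) (-A) ∪ Icc A N : Set ℝ)
      · rw [indicator_of_mem hx]
        have hy : A ≤ |x| ∧ |x| ≤ N ∧ (x = |x| ∨ x = -|x|) := by
          rcases hx with ⟨h1,h2⟩|⟨h1,h2⟩
          · have hxneg : x ≤ 0 := le_trans h2 (by linarith)
            rw [abs_of_nonpos hxneg]
            exact ⟨by linarith, by linarith, Or.inr (by ring)⟩
          · have hxpos : 0 ≤ x := le_trans hA0.le h1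
            rw [abs_of_nonneg hxpos]
            exact ⟨h1, h2, Or.inl rfl⟩
        obtain ⟨hy1, hy2, hy3⟩ := hy
        have hb := hpoint |x| hy1 hy2 x (by tauto)
        have heq : ENNReal.ofReal (D * |x|⁻¹) = ENNReal.ofReal (d * |x| ^ (-(1/p))) ^ p := by
          have habs0 : (0:ℝ) < |x| := lt_of_lt_of_le hA0 hy1
          rw [ENNReal.ofReal_rpow_of_nonneg (by positivity) hp0.le]
          congr 1
          rw [Real.mul_rpow hdpos.le (Real.rpow_nonneg (abs_nonneg x) _),
            ← Real.rpow_mul (abs_nonneg x),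
            show -(1/p)*p = -1 by field_simp, Real.rpow_neg_one, hDdef]
        rw [heq]
        exact ENNReal.rpow_le_rpow hb hp0.le
      · rw [indicator_of_notMem hx]
        exact zero_le
    refine le_trans ?_ (lintegral_mono hmono)
    rw [lintegral_indicator hS1]
    have hIntOn : IntegrableOn (fun x : ℝ => |x|⁻¹) (Icc (-N) (-A) ∪ Icc A N) :=
      (absinv_intOn_neg A N hA0).union (absinv_intOn A N hA0)
    have hInt : Integrable (fun x : ℝ => D * |x|⁻¹)
        (volume.restrict (Icc (-N) (-A) ∪ Icc A N)) := hIntOn.const_mul D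
    rw [← MeasureTheory.ofReal_integral_eq_lintegral_ofReal hInt
      (Filter.Eventually.of_forall fun x => by positivity)]
    apply ENNReal.ofReal_le_ofReal
    rw [MeasureTheory.integral_const_mul, aux_setint A N hA0 hAN, hlogN, ← hLdef]
  -- conclusion
  refine ⟨fNaux p N, fNaux_meas p N, ?_, ?_, ?_⟩
  · rw [hf_lint]
    exact ENNReal.ofReal_lt_top
  · rw [hf_lint]
    exact ENNReal.ofReal_pos.2 (by linarith)
  · rw [hf_lint]
    have hstrict : ENNReal.ofReal c * ENNReal.ofReal (2*T) ^ (1/p)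
        < ENNReal.ofReal (D * (2*(T-L))) ^ (1/p) := by
      have hTLpos : 0 < T - L := by linarith
      refine lt_of_le_of_lt (mul_le_mul_left
        (ENNReal.ofReal_le_ofReal hcc0) (ENNReal.ofReal (2*T) ^ (1/p))) ?_
      rw [ENNReal.ofReal_rpow_of_nonneg (by linarith) (by positivity),
          ENNReal.ofReal_rpow_of_nonneg (by positivity) (by positivity),
          ← ENNReal.ofReal_mul hc0pos.le]
      refine (ENNReal.ofReal_lt_ofReal_iff ?_).2 ?_
      · apply Real.rpow_pos_of_pos
        positivity
      · have h2 := Real.rpow_lt_rpow (by positivity) hnum (by positivity : (0:ℝ) < 1/p)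
        rw [Real.mul_rpow hC00.le (by linarith), hC0def,
          ← Real.rpow_mul hc0pos.le,
          show p * (1/p) = 1 by field_simp, Real.rpow_one] at h2
        exact h2
    exact lt_of_lt_of_le hstrict (ENNReal.rpow_le_rpow hlow (by positivity))
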